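/- Let p be a prime, K = F_p, k ≥ 1, and let A be a connected graded K-algebra with A_n = 0 for all n ≥ 3, with a basis {a_1, …, a_{2k}} of A_1 and a basis {e} of A_2, whose multiplication on basis elements is given by a_{2l−1}·a_{2l} = e and a_{2l}·a_{2l−1} = −e for 1 ≤ l ≤ k, and a_i·a_j = 0 for all other pairs (i, j). (A is the mod-p cohomology algebra of a Demushkin pro-p group with invariant q ≠ 2, with its symplectic basis.) Define σ(i) = i − 1 for i even and σ(i) = i + 1 for i odd. Then: (i) for every i, the colon ideal (0) : a_i equals the left ideal of A generated by { a_j : j ≠ σ(i) }; (ii) for every nonempty subset Y ⊆ {a_1, …, a_{2k}} and every a_i ∉ Y, the colon ideal (Y) : a_i equals the augmentation ideal A_+, which is the left ideal generated by {a_1, …, a_{2k}}. In particular, A is strongly Koszul with respect to {a_1, …, a_{2k}}. -/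
import Mathlib


/-- The colon ideal `I : x = {a | a * x ∈ I}` of a left ideal `I` by an element `x`. -/
def colonIdeal {A : Type*} [Ring A] (I : Ideal A) (x : A) : Ideal A :=
  Submodule.comap (LinearMap.toSpanSingleton A A x) I

/-- The augmentation ideal `A_+` of a connected graded algebra. -/
def augIdeal {K A : Type*} [Field K] [Ring A] [Algebra K A]
    (𝒜 : ℕ → Submodule K A) : Ideal A :=
  Ideal.span (⋃ n : ℕ, ((𝒜 (n + 1) : Submodule K A) : Set A))

/-- `A` is strongly Koszul with respect to a set `X` of (homogeneous) generators of the
augmentation ideal `P`: `X` generates `P`, no proper subset of `X` generates `P`, and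
for every `Y ⊊ X` and `x ∈ X \ Y` the colon ideal `(Y) : x` is generated by a subset of
`X`. -/
def StronglyKoszulWrt {A : Type*} [Ring A] (P : Ideal A) (X : Set A) : Prop :=
  Ideal.span X = P ∧ (∀ Y ⊂ X, Ideal.span Y ≠ P) ∧
    ∀ Y ⊂ X, ∀ z ∈ X \ Y, ∃ Z ⊆ X, colonIdeal (Ideal.span Y) z = Ideal.span Z

/-- The pairing involution of the symplectic basis, in 0-based indexing:
paper-index `i` even ↦ `i − 1`, paper-index `i` odd ↦ `i + 1`. -/
def sigma18 (i : ℕ) : ℕ := if Even i then i + 1 else i - 1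

lemma sigma18_lt {i k : ℕ} (h : i < 2 * k) : sigma18 i < 2 * k := by
  unfold sigma18; split_ifs with hi
  · rw [Nat.even_iff] at hi; omega
  · omega

lemma sigma18_ne (i : ℕ) : sigma18 i ≠ i := by
  unfold sigma18; split_ifs with hi
  · omega
  · rw [Nat.even_iff] at hi
    omega

/-- Let `A` be the mod-p cohomology algebra of a Demushkin pro-p group
with invariant `q ≠ 2`: a connected graded `F_p`-algebra with `A_n = 0` for `n ≥ 3`,
a (symplectic) basis `a_1, …, a_{2k}` of `A_1` (0-based: `a 0, …, a (2k−1)`) and a basis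
`{e}` of `A_2` with `a_{2l−1}·a_{2l} = e`, `a_{2l}·a_{2l−1} = −e` and all other products
of basis vectors zero.  Then (i) `(0) : a_i = ({a_j : j ≠ σ(i)})`; (ii) for every
nonempty `Y ⊆ {a_1, …, a_{2k}}` and every `a_i ∉ Y`, `(Y) : a_i = A_+`, which is the
left ideal generated by `{a_1, …, a_{2k}}`.  In particular `A` is strongly Koszul with
respect to `{a_1, …, a_{2k}}`. -/
theorem stmt18 (p : ℕ) [Fact p.Prime] {A : Type*} [Ring A] [Algebra (ZMod p) A]
    (𝒜 : ℕ → Submodule (ZMod p) A) [GradedAlgebra 𝒜]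
    (hconn : 𝒜 0 = 1)
    (htop : ∀ n, 3 ≤ n → 𝒜 n = ⊥)
    (k : ℕ) (hk : 1 ≤ k)
    (a : Fin (2 * k) → A) (ha1 : ∀ i, a i ∈ 𝒜 1)
    (hindep : LinearIndependent (ZMod p) a)
    (hspan1 : Submodule.span (ZMod p) (Set.range a) = 𝒜 1)
    (e : A) (he2 : e ∈ 𝒜 2) (hene : e ≠ 0)
    (hspan2 : 𝒜 2 = Submodule.span (ZMod p) {e})
    (hmul : ∀ i j : Fin (2 * k), a i * a j =
      if (j : ℕ) = (i : ℕ) + 1 ∧ Even (i : ℕ) then e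
      else if (i : ℕ) = (j : ℕ) + 1 ∧ Even (j : ℕ) then -e
      else 0) :
    (∀ i : Fin (2 * k), colonIdeal (⊥ : Ideal A) (a i)
        = Ideal.span (a '' {j : Fin (2 * k) | (j : ℕ) ≠ sigma18 (i : ℕ)}))
    ∧ (∀ Y : Set A, Y ⊆ Set.range a → Y.Nonempty → ∀ i : Fin (2 * k), a i ∉ Y →
        colonIdeal (Ideal.span Y) (a i) = augIdeal 𝒜)
    ∧ augIdeal 𝒜 = Ideal.span (Set.range a)
    ∧ StronglyKoszulWrt (augIdeal 𝒜) (Set.range a) := by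
  -- basic multiplication facts
  have hzero : ∀ i j : Fin (2 * k), (j : ℕ) ≠ sigma18 (i : ℕ) → a j * a i = 0 := by
    intro i j hj
    rw [hmul]
    unfold sigma18 at hj
    rw [if_neg, if_neg]
    · rintro ⟨h1, h2⟩
      rw [if_pos h2] at hj; omega
    · rintro ⟨h1, h2⟩
      rw [Nat.even_iff] at h2
      split_ifs at hj with hi
      · rw [Nat.even_iff] at hi; omega
      · omega
  have hsig : ∀ i j : Fin (2 * k), (j : ℕ) = sigma18 (i : ℕ) →
      a j * a i = e ∨ a j * a i = -e := by
    intro i j hj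
    rw [hmul]
    unfold sigma18 at hj
    split_ifs at hj with hi
    · right
      rw [if_neg (by omega), if_pos ⟨hj, hi⟩]
    · left
      rw [Nat.even_iff] at hi
      rw [if_pos]
      refine ⟨by omega, ?_⟩
      rw [Nat.even_iff]; omega
  -- the partner index as an element of Fin (2k)
  have hpart : ∀ i : Fin (2 * k), ∃ j : Fin (2 * k), (j : ℕ) = sigma18 (i : ℕ) :=
    fun i => ⟨⟨sigma18 i, sigma18_lt i.isLt⟩, rfl⟩
  -- colon ideal membership
  have hmemcol : ∀ (I : Ideal A) (x y : A), y ∈ colonIdeal I x ↔ y * x ∈ I := by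
    intro I x y
    simp [colonIdeal, Submodule.mem_comap, LinearMap.toSpanSingleton_apply, smul_eq_mul]
  -- K-span inside ideal span
  have hKle : ∀ (S : Set A) (x : A), x ∈ Submodule.span (ZMod p) S → x ∈ Ideal.span S := by
    intro S x hx
    have : Submodule.span (ZMod p) S ≤ (Ideal.span S).restrictScalars (ZMod p) :=
      Submodule.span_le.mpr Ideal.subset_span
    exact this hx
  have hsmulI : ∀ (I : Ideal A) (t : ZMod p) (x : A), x ∈ I → t • x ∈ I := by
    intro I t x hx
    rw [Algebra.smul_def]
    exact Ideal.mul_mem_left _ _ hx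
  -- e lies in any ideal generated by one of the basis vectors
  have hein : ∀ (Y : Set A) (m : Fin (2 * k)), a m ∈ Y → e ∈ Ideal.span Y := by
    intro Y m hm
    obtain ⟨j, hj⟩ := hpart m
    have hmem : a j * a m ∈ Ideal.span Y := Ideal.mul_mem_left _ _ (Ideal.subset_span hm)
    rcases hsig m j hj with h | h
    · rwa [h] at hmem
    · have := neg_mem hmem
      rwa [h, neg_neg] at this
  -- decomposition of elements
  have hdecomp : ∀ x : A, ∃ (c : ZMod p) (v w : A), v ∈ 𝒜 1 ∧ w ∈ 𝒜 2 ∧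
      x = algebraMap (ZMod p) A c + v + w := by
    intro x
    have htot : (⊤ : Submodule (ZMod p) A) ≤ 𝒜 0 ⊔ (𝒜 1 ⊔ 𝒜 2) := by
      rw [← (DirectSum.Decomposition.isInternal 𝒜).submodule_iSup_eq_top]
      refine iSup_le fun n => ?_
      match n with
      | 0 => exact le_sup_left
      | 1 => exact le_sup_of_le_right le_sup_left
      | 2 => exact le_sup_of_le_right le_sup_right
      | (m + 3) => rw [htop (m + 3) (by omega)]; exact bot_le
    have hx : x ∈ 𝒜 0 ⊔ (𝒜 1 ⊔ 𝒜 2) := htot Submodule.mem_top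
    obtain ⟨x0, hx0, y, hy, rfl⟩ := Submodule.mem_sup.mp hx
    obtain ⟨v, hv, w, hw, rfl⟩ := Submodule.mem_sup.mp hy
    rw [hconn, Submodule.one_eq_range] at hx0
    obtain ⟨c, rfl⟩ := hx0
    exact ⟨c, v, w, hv, hw, (add_assoc _ _ _).symm⟩
  -- the degree-1 projection
  obtain ⟨π1, hπ⟩ : ∃ f : A →ₗ[ZMod p] A,
      ∀ x, f x = (DirectSum.decompose 𝒜 x 1 : A) :=
    ⟨(𝒜 1).subtype.comp ((DirectSum.component (ZMod p) ℕ (fun i => 𝒜 i) 1).comp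
        (DirectSum.decomposeLinearEquiv 𝒜).toLinearMap), fun _ => rfl⟩
  have hπ1 : ∀ v ∈ 𝒜 1, π1 v = v := by
    intro v hv; rw [hπ, DirectSum.decompose_of_mem_same 𝒜 hv]
  have hπ2 : ∀ w ∈ 𝒜 2, π1 w = 0 := by
    intro w hw; rw [hπ, DirectSum.decompose_of_mem_ne 𝒜 hw (by norm_num)]
  have hπ0 : ∀ c : ZMod p, π1 (algebraMap (ZMod p) A c) = 0 := by
    intro c
    have h0 : algebraMap (ZMod p) A c ∈ 𝒜 0 := by
      rw [hconn, Submodule.one_eq_range]; exact ⟨c, rfl⟩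
    rw [hπ, DirectSum.decompose_of_mem_ne 𝒜 h0 (by norm_num)]
  -- product with a basis vector
  have hmulbot : ∀ w ∈ 𝒜 2, ∀ x ∈ 𝒜 1, w * x = 0 := by
    intro w hw x hx
    have : w * x ∈ 𝒜 3 := SetLike.mul_mem_graded hw hx
    rw [htop 3 le_rfl] at this
    simpa using this
  have hmulbot2 : ∀ x ∈ 𝒜 1, ∀ w ∈ 𝒜 2, x * w = 0 := by
    intro x hx w hw
    have : x * w ∈ 𝒜 3 := SetLike.mul_mem_graded hx hw
    rw [htop 3 le_rfl] at this
    simpa using this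
  have hmulbot3 : ∀ w ∈ 𝒜 2, ∀ x ∈ 𝒜 2, w * x = 0 := by
    intro w hw x hx
    have : w * x ∈ 𝒜 4 := SetLike.mul_mem_graded hw hx
    rw [htop 4 (by norm_num)] at this
    simpa using this
  have hprodc : ∀ (c : ZMod p) (v w : A), v ∈ 𝒜 1 → w ∈ 𝒜 2 → ∀ i : Fin (2 * k),
      ∃ t : ZMod p, (algebraMap (ZMod p) A c + v + w) * a i = c • a i + t • e := by
    intro c v w hv hw i
    have hva : v * a i ∈ Submodule.span (ZMod p) {e} := by
      rw [← hspan2]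
      exact SetLike.mul_mem_graded hv (ha1 i)
    obtain ⟨t, ht⟩ := Submodule.mem_span_singleton.mp hva
    exact ⟨t, by rw [add_mul, add_mul, hmulbot w hw _ (ha1 i), add_zero,
      ← Algebra.smul_def, ht]⟩
  have hprod : ∀ (r : A) (i : Fin (2 * k)), ∃ c t : ZMod p,
      r * a i = c • a i + t • e := by
    intro r i
    obtain ⟨c, v, w, hv, hw, rfl⟩ := hdecomp r
    obtain ⟨t, ht⟩ := hprodc c v w hv hw i
    exact ⟨c, t, ht⟩
  have hprodE : ∀ (r : A), ∃ c : ZMod p, r * e = c • e := by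
    intro r
    obtain ⟨c, v, w, hv, hw, rfl⟩ := hdecomp r
    refine ⟨c, ?_⟩
    rw [add_mul, add_mul, hmulbot2 v hv e he2, hmulbot3 w hw e he2,
      add_zero, add_zero, ← Algebra.smul_def]
  -- ideal span of a subset of the basis vectors sits inside the K-span with e added
  have hYle : ∀ Y : Set A, Y ⊆ Set.range a → ∀ x ∈ Ideal.span Y,
      x ∈ Submodule.span (ZMod p) (Y ∪ {e}) := by
    intro Y hY
    have hstab : ∀ r : A, ∀ x ∈ Submodule.span (ZMod p) (Y ∪ {e}),
        r * x ∈ Submodule.span (ZMod p) (Y ∪ {e}) := by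
      intro r x hx
      induction hx using Submodule.span_induction with
      | mem y hy =>
        rcases hy with hy | hy
        · obtain ⟨m, rfl⟩ := hY hy
          obtain ⟨c, t, hct⟩ := hprod r m
          rw [hct]
          exact Submodule.add_mem _
            (Submodule.smul_mem _ _ (Submodule.subset_span (Or.inl hy)))
            (Submodule.smul_mem _ _ (Submodule.subset_span (Or.inr rfl)))
        · rw [Set.mem_singleton_iff] at hy; subst hy
          obtain ⟨c, hc⟩ := hprodE r
          rw [hc]
          exact Submodule.smul_mem _ _ (Submodule.subset_span (Or.inr rfl))
      | zero => rw [mul_zero]; exact Submodule.zero_mem _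
      | add x y hx hy ihx ihy => rw [mul_add]; exact Submodule.add_mem _ ihx ihy
      | smul c x hx ih => rw [mul_smul_comm]; exact Submodule.smul_mem _ _ ih
    intro x hx
    induction hx using Submodule.span_induction with
    | mem y hy => exact Submodule.subset_span (Or.inl hy)
    | zero => exact Submodule.zero_mem _
    | add x y hx hy ihx ihy => exact Submodule.add_mem _ ihx ihy
    | smul r x hx ih => exact hstab r x ih
  -- the degree-1 part of anything in the ideal generated by `Y` avoiding `a i`
  have hπspan : ∀ Y : Set A, Y ⊆ Set.range a → ∀ i : Fin (2 * k), a i ∉ Y →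
      ∀ x ∈ Ideal.span Y, π1 x ∈ Submodule.span (ZMod p) (a '' {j | j ≠ i}) := by
    intro Y hY i hi x hx
    have h1 : π1 x ∈ Submodule.span (ZMod p) (π1 '' (Y ∪ {e})) :=
      Submodule.apply_mem_span_image_of_mem_span π1 (hYle Y hY x hx)
    refine Submodule.span_le.mpr ?_ h1
    rintro y ⟨z, hz, rfl⟩
    rcases hz with hz | hz
    · obtain ⟨m, rfl⟩ := hY hz
      rw [hπ1 _ (ha1 m)]
      exact Submodule.subset_span ⟨m, fun h => hi (h ▸ hz), rfl⟩
    · rw [Set.mem_singleton_iff] at hz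
      rw [hz, hπ2 e he2]
      exact Submodule.zero_mem _
  have hc0 : ∀ (i : Fin (2 * k)) (c : ZMod p),
      c • a i ∈ Submodule.span (ZMod p) (a '' {j | j ≠ i}) → c = 0 := by
    intro i c hc
    by_contra hne
    have hmem : a i ∈ Submodule.span (ZMod p) (a '' {j | j ≠ i}) := by
      have := Submodule.smul_mem _ c⁻¹ hc
      rwa [smul_smul, inv_mul_cancel₀ hne, one_smul] at this
    exact hindep.notMem_span_image (by simp) hmem
  have h0lt : (0 : ℕ) < 2 * k := by omega
  have heI : e ∈ Ideal.span (Set.range a) := hein _ ⟨0, h0lt⟩ (Set.mem_range_self _)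
  -- the augmentation ideal is generated by the basis vectors
  have haug : augIdeal 𝒜 = Ideal.span (Set.range a) := by
    apply le_antisymm
    · rw [augIdeal]
      refine Ideal.span_le.mpr ?_
      rintro x hx
      simp only [Set.mem_iUnion, SetLike.mem_coe] at hx
      obtain ⟨n, hn⟩ := hx
      match n with
      | 0 =>
        rw [← hspan1] at hn
        exact hKle _ _ hn
      | 1 =>
        rw [hspan2] at hn
        obtain ⟨t, rfl⟩ := Submodule.mem_span_singleton.mp hn
        exact hsmulI _ t _ heI
      | (m + 2) =>
        rw [htop (m + 3) (by omega)] at hn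
        rw [Submodule.mem_bot] at hn
        rw [hn]; exact zero_mem _
    · refine Ideal.span_le.mpr ?_
      rintro x ⟨i, rfl⟩
      exact Ideal.subset_span (Set.mem_iUnion.mpr ⟨0, ha1 i⟩)
  -- Part (i)
  have part1 : ∀ i : Fin (2 * k), colonIdeal (⊥ : Ideal A) (a i)
      = Ideal.span (a '' {j : Fin (2 * k) | (j : ℕ) ≠ sigma18 (i : ℕ)}) := by
    intro i
    have hiS : a i ∈ a '' {j : Fin (2 * k) | (j : ℕ) ≠ sigma18 (i : ℕ)} :=
      ⟨i, (sigma18_ne _).symm, rfl⟩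
    have heS : e ∈ Ideal.span (a '' {j : Fin (2 * k) | (j : ℕ) ≠ sigma18 (i : ℕ)}) :=
      hein _ i hiS
    apply le_antisymm
    · intro x hx
      rw [hmemcol, Submodule.mem_bot] at hx
      obtain ⟨c, v, w, hv, hw, rfl⟩ := hdecomp x
      rw [← hspan1] at hv
      obtain ⟨cf, hcf⟩ := (Submodule.mem_span_range_iff_exists_fun (ZMod p)).mp hv
      obtain ⟨j0, hj0⟩ := hpart i
      have hva : v * a i = cf j0 • (a j0 * a i) := by
        rw [← hcf, Finset.sum_mul, Finset.sum_eq_single j0]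
        · rw [smul_mul_assoc]
        · intro b _ hb
          rw [smul_mul_assoc, hzero i b fun h => hb (Fin.ext (h.trans hj0.symm)), smul_zero]
        · intro h; exact absurd (Finset.mem_univ j0) h
      have hxi : (algebraMap (ZMod p) A c + v + w) * a i
          = c • a i + cf j0 • (a j0 * a i) := by
        rw [add_mul, add_mul, hmulbot w hw _ (ha1 i), add_zero, ← Algebra.smul_def, hva]
      rw [hxi] at hx
      have hu : a j0 * a i ∈ 𝒜 2 := SetLike.mul_mem_graded (ha1 j0) (ha1 i)
      have hc : c = 0 := by
        have h1 : π1 (c • a i + cf j0 • (a j0 * a i)) = c • a i := by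
          rw [map_add, map_smul, map_smul, hπ1 _ (ha1 i), hπ2 _ hu, smul_zero, add_zero]
        rw [hx, map_zero] at h1
        rcases smul_eq_zero.mp h1.symm with h | h
        · exact h
        · exact absurd h (hindep.ne_zero i)
      have hcf0 : cf j0 = 0 := by
        rw [hc, zero_smul, zero_add] at hx
        rcases hsig i j0 hj0 with h | h <;> rw [h] at hx
        · rcases smul_eq_zero.mp hx with h' | h'
          · exact h'
          · exact absurd h' hene
        · rcases smul_eq_zero.mp hx with h' | h'
          · exact h'
          · exact absurd (neg_eq_zero.mp h') hene
      rw [hc, map_zero, zero_add]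
      apply Ideal.add_mem
      · apply hKle
        rw [← hcf]
        refine Submodule.sum_mem _ fun j _ => ?_
        by_cases hji : j = j0
        · rw [hji, hcf0, zero_smul]; exact Submodule.zero_mem _
        · exact Submodule.smul_mem _ _
            (Submodule.subset_span ⟨j, fun h => hji (Fin.ext (h.trans hj0.symm)), rfl⟩)
      · rw [hspan2] at hw
        obtain ⟨t, rfl⟩ := Submodule.mem_span_singleton.mp hw
        exact hsmulI _ t _ heS
    · refine Ideal.span_le.mpr ?_
      rintro x ⟨j, hj, rfl⟩
      rw [SetLike.mem_coe, hmemcol, Submodule.mem_bot]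
      exact hzero i j hj
  -- Part (ii)
  have part2 : ∀ Y : Set A, Y ⊆ Set.range a → Y.Nonempty → ∀ i : Fin (2 * k), a i ∉ Y →
      colonIdeal (Ideal.span Y) (a i) = Ideal.span (Set.range a) := by
    intro Y hY hne i hi
    obtain ⟨y0, hy0⟩ := hne
    obtain ⟨m, rfl⟩ := hY hy0
    have heY : e ∈ Ideal.span Y := hein Y m hy0
    apply le_antisymm
    · intro x hx
      rw [hmemcol] at hx
      obtain ⟨c, v, w, hv, hw, rfl⟩ := hdecomp x
      obtain ⟨t, ht⟩ := hprodc c v w hv hw i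
      rw [ht] at hx
      have h2 := hπspan Y hY i hi _ hx
      rw [map_add, map_smul, map_smul, hπ1 _ (ha1 i), hπ2 e he2, smul_zero, add_zero] at h2
      have hc := hc0 i c h2
      rw [hc, map_zero, zero_add]
      apply Ideal.add_mem
      · refine hKle _ _ ?_
        rw [hspan1]; exact hv
      · rw [hspan2] at hw
        obtain ⟨t', rfl⟩ := Submodule.mem_span_singleton.mp hw
        exact hsmulI _ t' _ heI
    · refine Ideal.span_le.mpr ?_
      rintro x ⟨j, rfl⟩
      rw [SetLike.mem_coe, hmemcol]
      by_cases hj : (j : ℕ) = sigma18 (i : ℕ)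
      · rcases hsig i j hj with h | h <;> rw [h]
        · exact heY
        · exact neg_mem heY
      · rw [hzero i j hj]; exact zero_mem _
  -- minimality
  have hmin : ∀ Y ⊂ Set.range a, Ideal.span Y ≠ augIdeal 𝒜 := by
    intro Y hY hEq
    obtain ⟨x, hxr, hxY⟩ := Set.exists_of_ssubset hY
    obtain ⟨i, rfl⟩ := hxr
    have h1 : a i ∈ Ideal.span Y := by
      rw [hEq, haug]; exact Ideal.subset_span (Set.mem_range_self i)
    have h2 : π1 (a i) ∈ Submodule.span (ZMod p) (a '' {j | j ≠ i}) :=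
      hπspan Y hY.subset i hxY _ h1
    rw [hπ1 _ (ha1 i)] at h2
    exact hindep.notMem_span_image (by simp) h2
  refine ⟨part1, fun Y hY hne i hi => (part2 Y hY hne i hi).trans haug.symm, haug, ?_⟩
  unfold StronglyKoszulWrt
  refine ⟨haug.symm, hmin, ?_⟩
  intro Y hY z hz
  obtain ⟨hzr, hzY⟩ := hz
  obtain ⟨i, rfl⟩ := hzr
  rcases Y.eq_empty_or_nonempty with rfl | hne
  · refine ⟨a '' {j : Fin (2 * k) | (j : ℕ) ≠ sigma18 (i : ℕ)}, ?_, ?_⟩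
    · rintro _ ⟨j, -, rfl⟩; exact ⟨j, rfl⟩
    · rw [Ideal.span_empty]; exact part1 i
  · exact ⟨Set.range a, subset_rfl, part2 Y hY.subset hne i hzY⟩
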